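/- arXiv:1303.1744 — 2 statements merged into one kernel-verified Lean document; each statement's English description precedes it below -/
import Mathlib

section
/- The current of transition paths is divergence free (equations (1.33)–(1.34) of the paper): Let Θ ⊆ ℝ^d be open. Suppose that on Θ the stationarity identity Σ_{i,j} ∂_i∂_j(a_{ij}ρ) = Σ_i ∂_i(b_i ρ) holds, that q: ℝ^d → ℝ is C² on Θ with Lq = 0 on Θ, and that q̃: ℝ^d → ℝ is C² on Θ with L̃q̃ = 0 on Θ. Then the vector field J_R(z) = ( b(z)ρ(z) − div(aρ)(z) ) q(z) q̃(z) + ρ(z) a(z) ( q̃(z)∇q(z) − q(z)∇q̃(z) ) satisfies ∇·J_R(z) = Σ_{j=1}^d ∂_j (J_R)_j (z) = 0 for every z ∈ Θ. -/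
open scoped BigOperators
open Set

/-- Partial derivative `∂ᵢ u (x)` on `ℝ^d = (Fin d → ℝ)`. -/
noncomputable def pd {d : ℕ} (i : Fin d) (u : (Fin d → ℝ) → ℝ) (x : Fin d → ℝ) : ℝ :=
  fderiv ℝ u x (Pi.single i 1)

/-- The elliptic operator `L u = ∑ᵢⱼ aᵢⱼ ∂ᵢ∂ⱼ u + ∑ᵢ bᵢ ∂ᵢ u`. -/
noncomputable def Lop {d : ℕ} (a : (Fin d → ℝ) → Fin d → Fin d → ℝ)
    (b : (Fin d → ℝ) → Fin d → ℝ) (u : (Fin d → ℝ) → ℝ) (x : Fin d → ℝ) : ℝ :=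
  (∑ i, ∑ j, a x i j * pd i (pd j u) x) + ∑ i, b x i * pd i u x

/-- The formal adjoint of `L` in `L²(ℝ^d, ρ dx)`. -/
noncomputable def Ltil {d : ℕ} (a : (Fin d → ℝ) → Fin d → Fin d → ℝ)
    (b : (Fin d → ℝ) → Fin d → ℝ) (ρ : (Fin d → ℝ) → ℝ)
    (u : (Fin d → ℝ) → ℝ) (x : Fin d → ℝ) : ℝ :=
  -(∑ i, b x i * pd i u x)
    + (2 / ρ x) * ∑ j, (∑ i, pd i (fun y => a y i j * ρ y) x) * pd j u x
    + ∑ i, ∑ j, a x i j * pd i (pd j u) x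

/-- The current of transition paths
`J_R = (bρ - div(aρ)) q q̃ + ρ a (q̃ ∇q - q ∇q̃)` (its `j`-th component). -/
noncomputable def JR {d : ℕ} (a : (Fin d → ℝ) → Fin d → Fin d → ℝ)
    (b : (Fin d → ℝ) → Fin d → ℝ) (ρ : (Fin d → ℝ) → ℝ)
    (q qt : (Fin d → ℝ) → ℝ) (z : Fin d → ℝ) (j : Fin d) : ℝ :=
  (b z j * ρ z - ∑ i, pd i (fun y => a y i j * ρ y) z) * (q z * qt z)
    + ρ z * ∑ i, a z j i * (qt z * pd i q z - q z * pd i qt z)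

/- ### Auxiliary lemmas about `pd` -/

lemma pd_add {d : ℕ} {f g : (Fin d → ℝ) → ℝ} {x} (j : Fin d)
    (hf : DifferentiableAt ℝ f x) (hg : DifferentiableAt ℝ g x) :
    pd j (fun y => f y + g y) x = pd j f x + pd j g x := by
  unfold pd; rw [fderiv_fun_add hf hg]; simp

lemma pd_sub {d : ℕ} {f g : (Fin d → ℝ) → ℝ} {x} (j : Fin d)
    (hf : DifferentiableAt ℝ f x) (hg : DifferentiableAt ℝ g x) :
    pd j (fun y => f y - g y) x = pd j f x - pd j g x := by
  unfold pd; rw [fderiv_fun_sub hf hg]; simp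

lemma pd_mul {d : ℕ} {f g : (Fin d → ℝ) → ℝ} {x} (j : Fin d)
    (hf : DifferentiableAt ℝ f x) (hg : DifferentiableAt ℝ g x) :
    pd j (fun y => f y * g y) x = f x * pd j g x + g x * pd j f x := by
  unfold pd; rw [fderiv_fun_mul hf hg]; simp

lemma pd_sum {d : ℕ} {ι : Type*} (s : Finset ι) (f : ι → (Fin d → ℝ) → ℝ) (x) (j : Fin d)
    (hf : ∀ i ∈ s, DifferentiableAt ℝ (f i) x) :
    pd j (fun y => ∑ i ∈ s, f i y) x = ∑ i ∈ s, pd j (f i) x := by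
  unfold pd; rw [fderiv_fun_sum hf]; simp

lemma contDiff_pd {d : ℕ} {g : (Fin d → ℝ) → ℝ} (hg : ContDiff ℝ 2 g) (i : Fin d) :
    ContDiff ℝ 1 (pd i g) := by
  exact (hg.fderiv_right (m := 1) (by norm_num)).clm_apply contDiff_const

lemma contDiffAt_pd {d : ℕ} {g : (Fin d → ℝ) → ℝ} {x} (hg : ContDiffAt ℝ 2 g x) (i : Fin d) :
    ContDiffAt ℝ 1 (pd i g) x := by
  exact (hg.fderiv_right (m := 1) (by norm_num)).clm_apply contDiffAt_const

/-- The current of transition paths is divergence free on `Θ`. -/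
theorem current_divergence_free {d : ℕ} (hd : 1 ≤ d)
    (a : (Fin d → ℝ) → Fin d → Fin d → ℝ) (b : (Fin d → ℝ) → Fin d → ℝ)
    (ρ : (Fin d → ℝ) → ℝ)
    (ha : ContDiff ℝ 2 a) (ha_symm : ∀ x i j, a x i j = a x j i)
    (hb : ContDiff ℝ 1 b)
    (hρ : ContDiff ℝ 2 ρ) (hρ_pos : ∀ x, 0 < ρ x)
    (Θ : Set (Fin d → ℝ)) (hΘ : IsOpen Θ)
    (hstat : ∀ x ∈ Θ,
      ∑ i, ∑ j, pd i (pd j (fun y => a y i j * ρ y)) x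
        = ∑ i, pd i (fun y => b y i * ρ y) x)
    (q qt : (Fin d → ℝ) → ℝ)
    (hq : ContDiffOn ℝ 2 q Θ) (hLq : ∀ x ∈ Θ, Lop a b q x = 0)
    (hqt : ContDiffOn ℝ 2 qt Θ) (hLqt : ∀ x ∈ Θ, Ltil a b ρ qt x = 0) :
    ∀ z ∈ Θ, ∑ j, pd j (fun y => JR a b ρ q qt y j) z = 0 := by
  intro z hz
  have hΘz : Θ ∈ nhds z := hΘ.mem_nhds hz
  have hRne : ρ z ≠ 0 := (hρ_pos z).ne'
  -- global differentiability facts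
  have hρd : Differentiable ℝ ρ := hρ.differentiable (by norm_num)
  have hbd : ∀ j : Fin d, Differentiable ℝ (fun y => b y j) := fun j =>
    (contDiff_pi.mp hb j).differentiable (by norm_num)
  have had : ∀ i j : Fin d, ContDiff ℝ 2 (fun y => a y i j) := fun i j =>
    contDiff_pi.mp (contDiff_pi.mp ha i) j
  have hg : ∀ i j : Fin d, ContDiff ℝ 2 (fun y => a y i j * ρ y) := fun i j =>
    (had i j).mul hρ
  have hgd : ∀ i j : Fin d, Differentiable ℝ (fun y => a y i j * ρ y) := fun i j =>
    (hg i j).differentiable (by norm_num)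
  have hpgd : ∀ k i j : Fin d, Differentiable ℝ (pd k (fun y => a y i j * ρ y)) := fun k i j =>
    (contDiff_pd (hg i j) k).differentiable (by norm_num)
  -- local differentiability facts about q, qt at z
  have hqz : ContDiffAt ℝ 2 q z := hq.contDiffAt hΘz
  have hqtz : ContDiffAt ℝ 2 qt z := hqt.contDiffAt hΘz
  have hqd : DifferentiableAt ℝ q z := hqz.differentiableAt (by norm_num)
  have hqtd : DifferentiableAt ℝ qt z := hqtz.differentiableAt (by norm_num)
  have hpqd : ∀ i : Fin d, DifferentiableAt ℝ (pd i q) z := fun i =>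
    (contDiffAt_pd hqz i).differentiableAt (by norm_num)
  have hpqtd : ∀ i : Fin d, DifferentiableAt ℝ (pd i qt) z := fun i =>
    (contDiffAt_pd hqtz i).differentiableAt (by norm_num)
  have hQQt : DifferentiableAt ℝ (fun y => q y * qt y) z := hqd.mul hqtd
  have hw : ∀ i : Fin d, DifferentiableAt ℝ (fun y => qt y * pd i q y - q y * pd i qt y) z :=
    fun i => ((hqtd.mul (hpqd i)).sub (hqd.mul (hpqtd i)))
  have hSd : ∀ j : Fin d,
      DifferentiableAt ℝ (fun y => ∑ i, pd i (fun y' => a y' i j * ρ y') y) z := fun j =>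
    DifferentiableAt.fun_sum (fun i _ => (hpgd i i j z))
  -- expansion of the divergence of each component
  have hJ : ∀ j : Fin d, pd j (fun y => JR a b ρ q qt y j) z =
      ρ z * qt z * (b z j * pd j q z)
      + ρ z * q z * (b z j * pd j qt z)
      + (q z * qt z) * pd j (fun y => b y j * ρ y) z
      - qt z * ((∑ i, pd i (fun y => a y i j * ρ y) z) * pd j q z)
      - q z * ((∑ i, pd i (fun y => a y i j * ρ y) z) * pd j qt z)
      - (q z * qt z) * (∑ i, pd j (pd i (fun y => a y i j * ρ y)) z)
      + ρ z * qt z * (∑ i, a z j i * pd j (pd i q) z)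
      + ρ z * (∑ i, a z j i * (pd i q z * pd j qt z))
      - ρ z * q z * (∑ i, a z j i * pd j (pd i qt) z)
      - ρ z * (∑ i, a z j i * (pd i qt z * pd j q z))
      + qt z * (∑ i, pd i q z * pd j (fun y => a y j i * ρ y) z)
      - q z * (∑ i, pd i qt z * pd j (fun y => a y j i * ρ y) z) := by
    intro j
    have hfun : (fun y => JR a b ρ q qt y j) =
        (fun y => (fun y => b y j * ρ y) y * (fun y => q y * qt y) y
          - (fun y => ∑ i, pd i (fun y' => a y' i j * ρ y') y) y * (fun y => q y * qt y) y
          + (fun y => ∑ i, (a y j i * ρ y) * (qt y * pd i q y - q y * pd i qt y)) y) := by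
      funext y
      simp only [JR, sub_mul, Finset.mul_sum]
      congr 1
      exact Finset.sum_congr rfl fun i _ => by ring
    rw [hfun]
    rw [pd_add j ((((hbd j z).fun_mul (hρd z)).fun_mul hQQt).fun_sub ((hSd j).fun_mul hQQt))
        (DifferentiableAt.fun_sum fun i _ => ((hgd j i z).fun_mul (hw i)))]
    rw [pd_sub j (((hbd j z).fun_mul (hρd z)).fun_mul hQQt) ((hSd j).fun_mul hQQt)]
    rw [pd_mul j ((hbd j z).fun_mul (hρd z)) hQQt]
    rw [pd_mul j (hSd j) hQQt]
    rw [pd_mul j hqd hqtd]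
    rw [pd_sum Finset.univ (fun i => pd i (fun y' => a y' i j * ρ y')) z j
        (fun i _ => (hpgd i i j z))]
    rw [pd_sum Finset.univ
        (fun i => fun y => (a y j i * ρ y) * (qt y * pd i q y - q y * pd i qt y)) z j
        (fun i _ => ((hgd j i z).fun_mul (hw i)))]
    have hi : ∀ i : Fin d,
        pd j (fun y => (a y j i * ρ y) * (qt y * pd i q y - q y * pd i qt y)) z
        = ρ z * qt z * (a z j i * pd j (pd i q) z)
          + ρ z * (a z j i * (pd i q z * pd j qt z))
          - ρ z * q z * (a z j i * pd j (pd i qt) z)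
          - ρ z * (a z j i * (pd i qt z * pd j q z))
          + qt z * (pd i q z * pd j (fun y => a y j i * ρ y) z)
          - q z * (pd i qt z * pd j (fun y => a y j i * ρ y) z) := by
      intro i
      rw [pd_mul j (hgd j i z) (hw i),
          pd_sub j (hqtd.fun_mul (hpqd i)) (hqd.fun_mul (hpqtd i)),
          pd_mul j hqtd (hpqd i), pd_mul j hqd (hpqtd i)]
      ring
    rw [Finset.sum_congr rfl (fun i _ => hi i)]
    simp only [Finset.sum_add_distrib, Finset.sum_sub_distrib, ← Finset.mul_sum]
    ring
  rw [Finset.sum_congr rfl (fun j _ => hJ j)]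
  simp only [Finset.sum_add_distrib, Finset.sum_sub_distrib, ← Finset.mul_sum]
  -- index gymnastics
  have hswapfun : ∀ i j : Fin d, (fun y => a y j i * ρ y) = (fun y => a y i j * ρ y) :=
    fun i j => funext fun y => by rw [ha_symm]
  have hα : (∑ j : Fin d, ∑ i : Fin d, pd j (pd i (fun y => a y i j * ρ y)) z)
      = ∑ j : Fin d, pd j (fun y => b y j * ρ y) z := by
    have h := hstat z hz
    calc (∑ j : Fin d, ∑ i : Fin d, pd j (pd i (fun y => a y i j * ρ y)) z)
        = ∑ j : Fin d, ∑ i : Fin d, pd j (pd i (fun y => a y j i * ρ y)) z :=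
          Finset.sum_congr rfl fun j _ => Finset.sum_congr rfl fun i _ => by
            rw [hswapfun i j]
      _ = ∑ j : Fin d, pd j (fun y => b y j * ρ y) z := h
  have hX : (∑ j : Fin d, ∑ i : Fin d, a z j i * (pd i q z * pd j qt z))
      = ∑ j : Fin d, ∑ i : Fin d, a z j i * (pd i qt z * pd j q z) := by
    rw [Finset.sum_comm]
    exact Finset.sum_congr rfl fun j _ => Finset.sum_congr rfl fun i _ => by
      rw [ha_symm]; ring
  have hγq : (∑ j : Fin d, ∑ i : Fin d, pd i q z * pd j (fun y => a y j i * ρ y) z)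
      = ∑ j : Fin d, (∑ i : Fin d, pd i (fun y => a y i j * ρ y) z) * pd j q z := by
    rw [Finset.sum_comm]
    exact Finset.sum_congr rfl fun j _ => by
      rw [Finset.sum_mul]
      exact Finset.sum_congr rfl fun i _ => mul_comm _ _
  have hγqt : (∑ j : Fin d, ∑ i : Fin d, pd i qt z * pd j (fun y => a y j i * ρ y) z)
      = ∑ j : Fin d, (∑ i : Fin d, pd i (fun y => a y i j * ρ y) z) * pd j qt z := by
    rw [Finset.sum_comm]
    exact Finset.sum_congr rfl fun j _ => by
      rw [Finset.sum_mul]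
      exact Finset.sum_congr rfl fun i _ => mul_comm _ _
  rw [hα, hX, hγq, hγqt]
  -- use the two PDEs
  have hLq' := hLq z hz
  have hLqt' := hLqt z hz
  simp only [Lop] at hLq'
  simp only [Ltil] at hLqt'
  set G : ℝ := ∑ j : Fin d, (∑ i : Fin d, pd i (fun y => a y i j * ρ y) z) * pd j qt z with hG
  have hc : ρ z * (2 / ρ z) = 2 := by field_simp
  have key : 2 * G = ρ z * (∑ i, b z i * pd i qt z)
      - ρ z * (∑ i, ∑ j, a z i j * pd i (pd j qt) z) := by
    have h : (2 / ρ z) * G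
        = (∑ i, b z i * pd i qt z) - ∑ i, ∑ j, a z i j * pd i (pd j qt) z := by
      linarith [hLqt']
    calc 2 * G = (ρ z * (2 / ρ z)) * G := by rw [hc]
      _ = ρ z * ((2 / ρ z) * G) := by ring
      _ = ρ z * ((∑ i, b z i * pd i qt z) - ∑ i, ∑ j, a z i j * pd i (pd j qt) z) := by rw [h]
      _ = _ := by ring
  linear_combination (ρ z * qt z) * hLq' - q z * key
end

section
/- Small-time asymptotics of the transition-path ODE solution (the asymptotic claim at the end of the Remark following the proof of Theorem 1): In the setting of the time-change construction — a, b: ℝ^d → ℝ^{d×d}, ℝ^d continuous, q: ℝ^d → ℝ C¹ with the gradient ∇q continuous at y₀, z: [0,T] → ℝ^d a C¹ curve with z(0) = y₀, z'(s) = 2a(z(s))∇q(z(s)) + q(z(s))b(z(s)), q(y₀) = 0, q(z(s)) > 0 for s ∈ (0,T], and ⟨∇q(y₀), a(y₀)∇q(y₀)⟩ > 0 — let F(t) = ∫₀ᵗ q(z(s)) ds and Ȳ = z ∘ F⁻¹ on [0, F(T)]. Then lim_{t → 0⁺} ( Ȳ(t) − y₀ ) / √t = 2 a(y₀) ∇q(y₀)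 / ⟨∇q(y₀), a(y₀)∇q(y₀)⟩^{1/2}; that is, Ȳ(t) ∼ y₀ + 2√t · a(y₀)∇q(y₀)/⟨∇q(y₀), a(y₀)∇q(y₀)⟩^{1/2} as t → 0⁺. -/
open scoped BigOperators
open Set

open intervalIntegral in
/-- `∫₀ᵗ c·s ds = c t²/2`. -/
lemma aux_integral_cs (c t : ℝ) : ∫ s in (0:ℝ)..t, c * s = c * (t ^ 2 / 2) := by
  rw [integral_const_mul, integral_id]
  ring

/-- Small-time asymptotics of the transition-path ODE solution `Ȳ = z ∘ F⁻¹`: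
`(Ȳ(t) - y₀)/√t → 2 a(y₀)∇q(y₀) / ⟨∇q(y₀), a(y₀)∇q(y₀)⟩^{1/2}` as `t → 0⁺`. -/
theorem small_time_asymptotics {d : ℕ} (hd : 1 ≤ d)
    (a : (Fin d → ℝ) → Fin d → Fin d → ℝ) (b : (Fin d → ℝ) → Fin d → ℝ)
    (ha : Continuous a) (hb : Continuous b)
    (q : (Fin d → ℝ) → ℝ) (hq : ContDiff ℝ 1 q)
    (T : ℝ) (hT : 0 < T) (y₀ : Fin d → ℝ)
    (z : ℝ → Fin d → ℝ) (hz0 : z 0 = y₀)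
    (hz' : ∀ s ∈ Icc (0 : ℝ) T,
      HasDerivWithinAt z
        (fun i => 2 * (∑ j, a (z s) i j * pd j q (z s)) + q (z s) * b (z s) i)
        (Icc (0 : ℝ) T) s)
    (hq0 : q y₀ = 0)
    (hqz : ∀ s ∈ Ioc (0 : ℝ) T, 0 < q (z s))
    (hhopf : 0 < ∑ i, ∑ j, pd i q y₀ * a y₀ i j * pd j q y₀)
    (F : ℝ → ℝ) (hF : F = fun t => ∫ s in (0 : ℝ)..t, q (z s))
    (G : ℝ → ℝ)
    (hG1 : ∀ t ∈ Icc (0 : ℝ) T, G (F t) = t)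
    (hG2 : ∀ u ∈ Icc (0 : ℝ) (F T), F (G u) = u) :
    Filter.Tendsto (fun t : ℝ => (1 / Real.sqrt t) • (z (G t) - y₀))
      (nhdsWithin 0 (Set.Ioi 0))
      (nhds (fun i => 2 * (∑ j, a y₀ i j * pd j q y₀) /
        Real.sqrt (∑ k, ∑ l, pd k q y₀ * a y₀ k l * pd l q y₀))) := by
  have hq' : Differentiable ℝ q := hq.differentiable one_ne_zero
  set c : ℝ := ∑ i, ∑ j, pd i q y₀ * a y₀ i j * pd j q y₀ with hc
  have hc0 : 0 < c := hhopf
  have h0T : (0 : ℝ) ∈ Icc (0 : ℝ) T := ⟨le_rfl, hT.le⟩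
  have hTT : T ∈ Icc (0 : ℝ) T := ⟨hT.le, le_rfl⟩
  -- continuity of z and q∘z on [0,T]
  have hzc : ContinuousOn z (Icc 0 T) := fun s hs => (hz' s hs).continuousWithinAt
  have hqzc : ContinuousOn (fun s => q (z s)) (Icc 0 T) :=
    hq.continuous.comp_continuousOn hzc
  have hInt : ∀ s ∈ Icc (0 : ℝ) T, ∀ t ∈ Icc (0 : ℝ) T,
      IntervalIntegrable (fun s => q (z s)) MeasureTheory.volume s t := by
    intro s hs t ht
    exact (hqzc.mono (uIcc_subset_Icc hs ht)).intervalIntegrable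
  have hF0 : F 0 = 0 := by simp [hF]
  have hFsub : ∀ s ∈ Icc (0 : ℝ) T, ∀ t ∈ Icc (0 : ℝ) T,
      F t - F s = ∫ u in s..t, q (z u) := by
    intro s hs t ht
    have h := intervalIntegral.integral_add_adjacent_intervals
      (hInt 0 h0T s hs) (hInt s hs t ht)
    rw [hF]
    simp only
    linarith [h]
  have hFmono : StrictMonoOn F (Icc 0 T) := by
    intro s hs t ht hst
    have hpos : 0 < ∫ u in s..t, q (z u) := by
      refine intervalIntegral.intervalIntegral_pos_of_pos_on (hInt s hs t ht) ?_ hst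
      intro x hx
      exact hqz x ⟨lt_of_le_of_lt hs.1 hx.1, hx.2.le.trans ht.2⟩
    have h := hFsub s hs t ht
    linarith
  have hFcont : ContinuousOn F (Icc 0 T) := by
    rw [hF, ← uIcc_of_le hT.le]
    refine intervalIntegral.continuousOn_primitive_interval ?_
    rw [uIcc_of_le hT.le]
    exact hqzc.integrableOn_Icc
  have hFT : 0 < F T := by
    have := hFmono h0T hTT hT
    linarith [hF0]
  -- G maps [0, F T] into [0, T]
  have hGspec : ∀ u ∈ Icc (0 : ℝ) (F T), G u ∈ Icc (0 : ℝ) T := by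
    intro u hu
    have hu' : u ∈ Icc (F 0) (F T) := by rwa [hF0]
    obtain ⟨t, ht, hFt⟩ := intermediate_value_Icc hT.le hFcont hu'
    rw [← hFt, hG1 t ht]
    exact ht
  have hGpos : ∀ u ∈ Ioc (0 : ℝ) (F T), 0 < G u := by
    intro u hu
    rcases lt_or_eq_of_le (hGspec u ⟨hu.1.le, hu.2⟩).1 with h | h
    · exact h
    · exfalso
      have : F (G u) = u := hG2 u ⟨hu.1.le, hu.2⟩
      rw [← h, hF0] at this
      exact absurd this.symm (ne_of_gt hu.1)
  have hGlt : ∀ u ∈ Ioc (0 : ℝ) (F T), ∀ e ∈ Ioc (0 : ℝ) T, u < F e → G u < e := by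
    intro u hu e he hue
    by_contra h
    push_neg at h
    have : F e ≤ F (G u) :=
      hFmono.monotoneOn ⟨he.1.le, he.2⟩ (hGspec u ⟨hu.1.le, hu.2⟩) h
    rw [hG2 u ⟨hu.1.le, hu.2⟩] at this
    linarith
  -- G tends to 0 from the right
  have hGto : Filter.Tendsto G (nhdsWithin 0 (Set.Ioi 0)) (nhds 0) := by
    rw [Metric.tendsto_nhdsWithin_nhds]
    intro ε hε
    have hmem : min ε T ∈ Ioc (0 : ℝ) T := ⟨lt_min hε hT, min_le_right _ _⟩
    have hδ : 0 < F (min ε T) := by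
      have := hFmono h0T ⟨hmem.1.le, hmem.2⟩ hmem.1
      linarith [hF0]
    refine ⟨F (min ε T), hδ, ?_⟩
    intro x hx hdist
    have hxF : F (min ε T) ≤ F T :=
      hFmono.monotoneOn ⟨hmem.1.le, hmem.2⟩ hTT hmem.2
    rw [Real.dist_eq, sub_zero, abs_of_pos hx] at hdist
    have hxIoc : x ∈ Ioc (0 : ℝ) (F T) := ⟨hx, hdist.le.trans hxF⟩
    have h1 : G x < min ε T := hGlt x hxIoc (min ε T) hmem hdist
    rw [Real.dist_eq, sub_zero, abs_of_pos (hGpos x hxIoc)]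
    exact h1.trans_le (min_le_left _ _)
  have hevIoc : ∀ᶠ u in nhdsWithin 0 (Set.Ioi 0), u ∈ Ioc (0 : ℝ) (F T) :=
    Filter.eventually_of_mem (Ioc_mem_nhdsGT_of_mem ⟨le_rfl, hFT⟩) (fun u hu => hu)
  have hGIoc : Filter.Tendsto G (nhdsWithin 0 (Set.Ioi 0)) (nhdsWithin 0 (Ioc 0 T)) := by
    rw [tendsto_nhdsWithin_iff]
    refine ⟨hGto, ?_⟩
    filter_upwards [hevIoc] with u hu
    exact ⟨hGpos u hu, (hGspec u ⟨hu.1.le, hu.2⟩).2⟩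
  have hIocSub : Ioc (0 : ℝ) T ⊆ Icc (0 : ℝ) T \ {0} :=
    fun s hs => ⟨⟨hs.1.le, hs.2⟩, ne_of_gt hs.1⟩
  have hGdiff : Filter.Tendsto G (nhdsWithin 0 (Set.Ioi 0))
      (nhdsWithin 0 (Icc (0 : ℝ) T \ {0})) :=
    hGIoc.mono_right (nhdsWithin_mono 0 hIocSub)
  -- the derivative of q ∘ z at 0 is 2c
  have key : ∀ v : Fin d → ℝ, fderiv ℝ q y₀ v = ∑ i, v i * pd i q y₀ := by
    intro v
    have h := LinearMap.pi_apply_eq_sum_univ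
      ((fderiv ℝ q y₀) : (Fin d → ℝ) →ₗ[ℝ] ℝ) v
    simp only [ContinuousLinearMap.coe_coe, smul_eq_mul] at h
    rw [h]
    refine Finset.sum_congr rfl fun i _ => ?_
    congr 1
    simp only [pd]
    congr 1
    funext j
    simp [Pi.single_apply, eq_comm]
  have hqz0 : HasDerivWithinAt (fun s => q (z s)) (2 * c) (Icc 0 T) 0 := by
    have hcomp := ((hq' (z 0)).hasFDerivAt).comp_hasDerivWithinAt 0 (hz' 0 h0T)
    have hval : fderiv ℝ q (z 0)
        (fun i => 2 * (∑ j, a (z 0) i j * pd j q (z 0)) + q (z 0) * b (z 0) i)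
        = 2 * c := by
      rw [hz0, key]
      simp only [hq0, zero_mul, add_zero]
      rw [hc, Finset.mul_sum]
      refine Finset.sum_congr rfl fun i _ => ?_
      rw [Finset.mul_sum, Finset.sum_mul, Finset.mul_sum]
      exact Finset.sum_congr rfl fun j _ => by ring
    rw [hval] at hcomp
    exact hcomp
  have hqslope : Filter.Tendsto (fun s => q (z s) / s)
      (nhdsWithin 0 (Icc (0 : ℝ) T \ {0})) (nhds (2 * c)) := by
    have h := hasDerivWithinAt_iff_tendsto_slope.mp hqz0
    refine h.congr ?_
    intro s
    simp [slope_def_field, hz0, hq0]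
  -- F t / t² → c as t → 0 within Ioc 0 T
  have hFasym : Filter.Tendsto (fun t => F t / t ^ 2)
      (nhdsWithin 0 (Ioc (0 : ℝ) T)) (nhds c) := by
    rw [Metric.tendsto_nhdsWithin_nhds]
    intro ε hε
    have hq2 := hqslope.mono_left (nhdsWithin_mono 0 hIocSub)
    rw [Metric.tendsto_nhdsWithin_nhds] at hq2
    obtain ⟨δ, hδ, hδ2⟩ := hq2 ε hε
    refine ⟨δ, hδ, ?_⟩
    intro t ht hdist
    rw [Real.dist_eq, sub_zero, abs_of_pos ht.1] at hdist
    -- pointwise bound on [0, t]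
    have hbound : ∀ s ∈ Icc (0 : ℝ) t, |q (z s) - 2 * c * s| ≤ ε * s := by
      intro s hs
      rcases eq_or_lt_of_le hs.1 with h | h
      · rw [← h]
        simp [hz0, hq0]
      · have hsIoc : s ∈ Ioc (0 : ℝ) T := ⟨h, hs.2.trans ht.2⟩
        have hsd : dist s 0 < δ := by
          rw [Real.dist_eq, sub_zero, abs_of_pos h]
          exact lt_of_le_of_lt hs.2 hdist
        have := hδ2 hsIoc hsd
        rw [Real.dist_eq] at this
        have heq : q (z s) / s - 2 * c = (q (z s) - 2 * c * s) / s := by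
          rw [sub_div, mul_div_assoc, div_self (ne_of_gt h), mul_one]
        rw [heq, abs_div, abs_of_pos h, div_lt_iff₀ h] at this
        linarith [this]
    have htmem : t ∈ Icc (0 : ℝ) T := ⟨ht.1.le, ht.2⟩
    have hint1 : IntervalIntegrable (fun s => q (z s)) MeasureTheory.volume 0 t :=
      hInt 0 h0T t htmem
    have hint2 : IntervalIntegrable (fun s => 2 * c * s) MeasureTheory.volume 0 t :=
      (continuous_const.mul continuous_id).intervalIntegrable 0 t
    have hint3 : IntervalIntegrable (fun s => |q (z s) - 2 * c * s|) MeasureTheory.volume 0 t :=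
      (hint1.sub hint2).abs
    have hint4 : IntervalIntegrable (fun s => ε * s) MeasureTheory.volume 0 t :=
      (continuous_const.mul continuous_id).intervalIntegrable 0 t
    have heqF : F t - c * t ^ 2 = ∫ s in (0:ℝ)..t, (q (z s) - 2 * c * s) := by
      rw [intervalIntegral.integral_sub hint1 hint2, hF, aux_integral_cs (2 * c) t]
      ring
    have h1 : |∫ s in (0:ℝ)..t, (q (z s) - 2 * c * s)|
        ≤ ∫ s in (0:ℝ)..t, |q (z s) - 2 * c * s| :=
      intervalIntegral.abs_integral_le_integral_abs ht.1.le
    have h2 : (∫ s in (0:ℝ)..t, |q (z s) - 2 * c * s|) ≤ ∫ s in (0:ℝ)..t, ε * s :=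
      intervalIntegral.integral_mono_on ht.1.le hint3 hint4 hbound
    have h3 : (∫ s in (0:ℝ)..t, ε * s) = ε * (t ^ 2 / 2) := aux_integral_cs ε t
    have h4 : |F t - c * t ^ 2| ≤ ε * (t ^ 2 / 2) := by
      rw [heqF]; rw [h3] at h2; exact h1.trans h2
    have ht2 : (0:ℝ) < t ^ 2 := pow_pos ht.1 2
    rw [Real.dist_eq]
    have habs : |F t / t ^ 2 - c| = |F t - c * t ^ 2| / t ^ 2 := by
      have hsub : F t / t ^ 2 - c = (F t - c * t ^ 2) / t ^ 2 := by
        rw [sub_div, mul_div_assoc, div_self (ne_of_gt ht2), mul_one]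
      rw [hsub, abs_div, abs_of_pos ht2]
    rw [habs]
    have ht2' : t ^ 2 ≠ 0 := ne_of_gt ht2
    calc |F t - c * t ^ 2| / t ^ 2 ≤ ε * (t ^ 2 / 2) / t ^ 2 := by gcongr
      _ = ε / 2 := by rw [eq_div_iff two_ne_zero, div_mul_eq_mul_div, div_eq_iff ht2']; ring
      _ < ε := by linarith
  -- u / (G u)² → c, hence G u / √u → 1/√c
  have h1 : Filter.Tendsto (fun u => F (G u) / (G u) ^ 2)
      (nhdsWithin 0 (Set.Ioi 0)) (nhds c) := hFasym.comp hGIoc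
  have h2 : Filter.Tendsto (fun u => u / (G u) ^ 2)
      (nhdsWithin 0 (Set.Ioi 0)) (nhds c) := by
    refine h1.congr' ?_
    filter_upwards [hevIoc] with u hu
    rw [hG2 u ⟨hu.1.le, hu.2⟩]
  have h3 : Filter.Tendsto (fun u => (G u) ^ 2 / u)
      (nhdsWithin 0 (Set.Ioi 0)) (nhds c⁻¹) := by
    have h := h2.inv₀ (ne_of_gt hc0)
    refine h.congr ?_
    intro u
    rw [inv_div]
  have h4 : Filter.Tendsto (fun u => G u / Real.sqrt u)
      (nhdsWithin 0 (Set.Ioi 0)) (nhds (Real.sqrt c)⁻¹) := by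
    have hcont : Filter.Tendsto Real.sqrt (nhds c⁻¹) (nhds (Real.sqrt c⁻¹)) :=
      Real.continuous_sqrt.continuousAt
    have h := hcont.comp h3
    rw [Real.sqrt_inv] at h
    refine h.congr' ?_
    filter_upwards [hevIoc] with u hu
    have hGu : 0 ≤ G u := (hGpos u hu).le
    show Real.sqrt ((G u) ^ 2 / u) = G u / Real.sqrt u
    rw [Real.sqrt_div (by positivity) u, Real.sqrt_sq hGu]
  -- slope of z at 0 composed with G
  set v₀ : Fin d → ℝ :=
    fun i => 2 * (∑ j, a y₀ i j * pd j q y₀) + q y₀ * b y₀ i with hv₀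
  have hzslope := hasDerivWithinAt_iff_tendsto_slope.mp (hz' 0 h0T)
  rw [hz0] at hzslope
  have hslopez : Filter.Tendsto (fun u => (G u)⁻¹ • (z (G u) - y₀))
      (nhdsWithin 0 (Set.Ioi 0)) (nhds v₀) := by
    have h := hzslope.comp hGdiff
    refine h.congr ?_
    intro u
    show slope z 0 (G u) = (G u)⁻¹ • (z (G u) - y₀)
    rw [slope_def_module, sub_zero, hz0]
  have hfinal := h4.smul hslopez
  have hval : ((Real.sqrt c)⁻¹ • v₀) =
      (fun i => 2 * (∑ j, a y₀ i j * pd j q y₀) /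
        Real.sqrt (∑ k, ∑ l, pd k q y₀ * a y₀ k l * pd l q y₀)) := by
    funext i
    show (Real.sqrt c)⁻¹ * (2 * (∑ j, a y₀ i j * pd j q y₀) + q y₀ * b y₀ i) = _
    rw [hq0, ← hc]
    ring
  rw [hval] at hfinal
  refine hfinal.congr' ?_
  filter_upwards [hevIoc] with u hu
  have hGu : G u ≠ 0 := ne_of_gt (hGpos u hu)
  rw [smul_smul]
  congr 1
  rw [div_mul_eq_mul_div, mul_inv_cancel₀ hGu]
end
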